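/- arXiv:1801.08158 — 2 statements merged into one kernel-verified Lean document; each statement's English description precedes it below -/
import Mathlib

section
/- Let a(z) = ∑_{j=−n₋}^{n₊} a_j z^j be a Laurent polynomial admitting a Wiener–Hopf factorization a(z) = u(z)·l(1/z), where u(z) = ∑_{i=0}^{n₊} u_i z^i and l(z) = ∑_{i=0}^{n₋} l_i z^i are polynomials nonvanishing on the closed unit disk (so in particular u₀ ≠ 0). Let h = (h_k)_{k∈ℤ} be the absolutely summable Laurent coefficient sequence of a(z)^{−1}, i.e., the unique Wiener-class sequence with ∑_m a_m h_{k−m} = δ_{k,0} for all k ∈ ℤ. Then for every integer i ≥ 1: ∑_{j=0}^{n₋} h_{j+1−i} · l_j = u₀^{−1} if i = 1, and ∑_{j=0}^{n₋} h_{j+1−i} · l_j = 0 if i ≥ 2. (In other words, multiplying the semi-infinite Toeplitz matrix (h_{j−i}) by the coefficient vector of l yields u₀^{−1} times the first unit vector, so a finite Toeplitz section of a^{−1} recovers the Wiener–Hopf factor l up to a normalization constant.) -/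
open Finset
open scoped ENNReal NNReal

-- step 1: find rho
lemma step_rho (np : ℕ) (u : ℕ → ℂ)
    (hu_nv : ∀ z : ℂ, ‖z‖ ≤ 1 → ∑ i ∈ Finset.range (np + 1), u i * z ^ i ≠ 0) :
    ∃ ρ : ℝ, 1 < ρ ∧ ∀ z : ℂ, ‖z‖ ≤ ρ → ∑ i ∈ Finset.range (np + 1), u i * z ^ i ≠ 0 := by
  set U : ℂ → ℂ := fun z => ∑ i ∈ Finset.range (np + 1), u i * z ^ i with hU
  have hUc : Continuous U := by
    apply continuous_finset_sum
    intro i _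
    fun_prop
  set K : Set ℂ := Metric.closedBall (0:ℂ) 2 ∩ {z | U z = 0} with hK
  have hKc : IsCompact K := (isCompact_closedBall _ _).inter_right
    (isClosed_eq hUc continuous_const)
  rcases K.eq_empty_or_nonempty with he | hne
  · refine ⟨3/2, by norm_num, fun z hz h0 => ?_⟩
    have : z ∈ K := ⟨by simpa [Metric.mem_closedBall, dist_zero_right] using hz.trans (by norm_num),
      h0⟩
    simp [he] at this
  · obtain ⟨x, hxK, hxmin⟩ := hKc.exists_isMinOn hne continuous_norm.continuousOn
    have hx1 : 1 < ‖x‖ := by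
      by_contra hle
      exact hu_nv x (le_of_not_gt hle) hxK.2
    refine ⟨(1 + ‖x‖)/2, by linarith, fun z hz h0 => ?_⟩
    have hx2 : ‖x‖ ≤ 2 := by simpa [Metric.mem_closedBall, dist_zero_right] using hxK.1
    have hzK : z ∈ K := ⟨by simp only [Metric.mem_closedBall, dist_zero_right]; linarith, h0⟩
    have := hxmin hzK
    simp only [Set.mem_setOf_eq] at this
    linarith

lemma step_inv (np : ℕ) (u : ℕ → ℂ)
    (hu_nv : ∀ z : ℂ, ‖z‖ ≤ 1 → ∑ i ∈ Finset.range (np + 1), u i * z ^ i ≠ 0) :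
    ∃ v : ℕ → ℂ, (Summable fun n => ‖v n‖) ∧ v 0 = (u 0)⁻¹ ∧
      ∀ n : ℕ, (∑ k ∈ Finset.range (n + 1), (if k ≤ np then u k else 0) * v (n - k)) =
        if n = 0 then 1 else 0 := by
  obtain ⟨ρ, hρ1, hρnv⟩ := step_rho np u hu_nv
  set U : ℂ → ℂ := fun z => ∑ i ∈ Finset.range (np + 1), u i * z ^ i with hUdef
  have hUdiff : Differentiable ℂ U := by
    apply Differentiable.fun_sum
    intro i _
    fun_prop
  set R : ℝ≥0 := ⟨ρ, by linarith⟩ with hRdef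
  have hcoe : (R : ℝ) = ρ := rfl
  have hdiff : DifferentiableOn ℂ (fun z => (U z)⁻¹) (Metric.closedBall 0 (R:ℝ)) := by
    apply DifferentiableOn.inv hUdiff.differentiableOn
    intro z hz
    exact hρnv z (by simpa [dist_zero_right, hcoe] using hz)
  have hps : HasFPowerSeriesOnBall (fun z => (U z)⁻¹) (cauchyPowerSeries (fun z => (U z)⁻¹) 0 R)
      0 R := hdiff.hasFPowerSeriesOnBall (by simp only [← NNReal.coe_pos, hcoe]; linarith)
  set p := cauchyPowerSeries (fun z => (U z)⁻¹) 0 R with hpdef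
  set v : ℕ → ℂ := p.coeff with hvdef
  have h_rad : ((1:ℝ≥0) : ℝ≥0∞) < p.radius := by
    refine lt_of_lt_of_le ?_ hps.r_le
    rw [ENNReal.coe_lt_coe, ← NNReal.coe_lt_coe, hcoe]
    exact hρ1
  have hsv : Summable fun n => ‖v n‖ := by
    have := p.summable_norm_mul_pow h_rad
    simpa [FormalMultilinearSeries.norm_apply_eq_norm_coef] using this
  have hsum : ∀ y : ℂ, ‖y‖ < 1 → HasSum (fun n => v n * y ^ n) ((U y)⁻¹) := by
    intro y hy
    have hmem : y ∈ Metric.eball (0:ℂ) R := by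
      rw [Metric.mem_eball, edist_zero_right]
      have hlt : ‖y‖₊ < R := by
        rw [← NNReal.coe_lt_coe, coe_nnnorm, hcoe]
        linarith
      rw [enorm_eq_nnnorm]; exact_mod_cast hlt
    have h2 := hps.hasSum hmem
    simp only [FormalMultilinearSeries.apply_eq_pow_smul_coeff, smul_eq_mul, zero_add] at h2
    have h3 : (fun n => v n * y ^ n) = fun n => y ^ n * v n := by funext n; ring
    rw [h3]
    exact h2
  -- Cauchy product
  set ut : ℕ → ℂ := fun n => if n ≤ np then u n else 0 with hutdef
  set c : ℕ → ℂ := fun n => ∑ k ∈ Finset.range (n + 1), ut k * v (n - k) with hcdef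
  have hsut : Summable fun n => ‖ut n‖ := by
    apply summable_of_ne_finset_zero (s := Finset.range (np + 1))
    intro n hn
    have hnp : ¬ n ≤ np := by
      rw [Finset.mem_range] at hn; omega
    simp only [hutdef, if_neg hnp, norm_zero]
  have hsc : Summable fun n => ‖c n‖ :=
    summable_norm_sum_mul_range_of_summable_norm hsut hsv
  have hprod : ∀ y : ℂ, ‖y‖ < 1 → ∑' n, c n * y ^ n = 1 := by
    intro y hy
    have hy1 : ‖y‖ ≤ 1 := hy.le
    have hf1 : Summable fun n => ‖ut n * y ^ n‖ := by
      apply Summable.of_nonneg_of_le (fun n => norm_nonneg _) _ hsut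
      intro n
      rw [norm_mul, norm_pow]
      exact mul_le_of_le_one_right (norm_nonneg _) (pow_le_one₀ (norm_nonneg _) hy1)
    have hg1 : Summable fun n => ‖v n * y ^ n‖ := by
      apply Summable.of_nonneg_of_le (fun n => norm_nonneg _) _ hsv
      intro n
      rw [norm_mul, norm_pow]
      exact mul_le_of_le_one_right (norm_nonneg _) (pow_le_one₀ (norm_nonneg _) hy1)
    have key := tsum_mul_tsum_eq_tsum_sum_range_of_summable_norm hf1 hg1
    have hU : ∑' n, ut n * y ^ n = U y := by
      rw [tsum_eq_sum (s := Finset.range (np + 1))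
        (by
          intro n hn
          rw [Finset.mem_range] at hn
          have hnp : ¬ n ≤ np := by omega
          simp only [hutdef, if_neg hnp, zero_mul])]
      apply Finset.sum_congr rfl
      intro i hi
      rw [Finset.mem_range] at hi
      have hle : i ≤ np := by omega
      simp only [hutdef, if_pos hle]
    have hV : ∑' n, v n * y ^ n = (U y)⁻¹ := (hsum y hy).tsum_eq
    rw [hU, hV, mul_inv_cancel₀ (hρnv y (by linarith))] at key
    rw [key]
    apply tsum_congr
    intro n
    rw [hcdef]
    simp only
    rw [Finset.sum_mul]
    apply Finset.sum_congr rfl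
    intro k hk
    have hkn : k ≤ n := by
      have := Finset.mem_range.mp hk; omega
    have hp : y ^ k * y ^ (n - k) = y ^ n := by
      rw [← pow_add]
      congr 1
      omega
    rw [← hp]
    ring
  -- uniqueness of power series coefficients
  set q := FormalMultilinearSeries.ofScalars ℂ c with hqdef
  have hq : HasFPowerSeriesOnBall (fun _ : ℂ => (1:ℂ)) q 0 1 := by
    refine ⟨?_, one_pos, ?_⟩
    · have hsq : Summable fun n => ‖q n‖ * ((1:ℝ≥0):ℝ) ^ n := by
        have he : (fun n => ‖q n‖ * ((1:ℝ≥0):ℝ) ^ n) = fun n => ‖c n‖ := by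
          funext n
          rw [hqdef, FormalMultilinearSeries.ofScalars_norm]
          simp
        rw [he]
        exact hsc
      simpa using q.le_radius_of_summable hsq
    · intro y hy
      rw [Metric.mem_eball, edist_zero_right] at hy
      have hy1 : ‖y‖ < 1 := by
        have : ‖y‖₊ < (1:ℝ≥0) := ENNReal.coe_lt_coe.mp (by rw [← enorm_eq_nnnorm]; simpa using hy)
        simpa [← NNReal.coe_lt_coe] using this
      have heq1 : (fun n => q n fun _ => y) = fun n => c n * y ^ n := by
        funext n
        rw [hqdef, FormalMultilinearSeries.ofScalars_apply_eq, smul_eq_mul]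
      rw [heq1]
      have hsummy : Summable fun n => c n * y ^ n := by
        apply Summable.of_norm
        apply Summable.of_nonneg_of_le (fun n => norm_nonneg _) _ hsc
        intro n
        rw [norm_mul, norm_pow]
        exact mul_le_of_le_one_right (norm_nonneg _) (pow_le_one₀ (norm_nonneg _) hy1.le)
      exact hsummy.hasSum_iff.mpr (hprod y hy1)
  have hconstp : HasFPowerSeriesAt (fun _ : ℂ => (1:ℂ))
      (constFormalMultilinearSeries ℂ ℂ 1) 0 :=
    hasFPowerSeriesOnBall_const.hasFPowerSeriesAt
  have heqq : q = constFormalMultilinearSeries ℂ ℂ 1 :=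
    hq.hasFPowerSeriesAt.eq_formalMultilinearSeries hconstp
  have hcn : ∀ n : ℕ, n ≠ 0 → c n = 0 := by
    intro n hn
    have h1 : q n = 0 := by
      rw [heqq, constFormalMultilinearSeries_apply_of_nonzero hn]
    have h2 : q n (fun _ => (1:ℂ)) = c n := by
      rw [hqdef, FormalMultilinearSeries.ofScalars_apply_eq, smul_eq_mul, one_pow, mul_one]
    rw [h1] at h2
    simpa using h2.symm
  have hc0 : c 0 = 1 := by
    have h0 := hprod 0 (by norm_num)
    have heq2 : (fun n => c n * (0:ℂ) ^ n) = fun n => if n = 0 then c 0 else 0 := by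
      funext n
      rcases Nat.eq_zero_or_pos n with rfl | hn
      · simp
      · simp [zero_pow (by omega : n ≠ 0), Nat.pos_iff_ne_zero.mp hn]
    rw [heq2, tsum_ite_eq] at h0
    exact h0
  have hcall : ∀ n : ℕ, c n = if n = 0 then 1 else 0 := by
    intro n
    rcases Nat.eq_zero_or_pos n with rfl | hn
    · simpa using hc0
    · have hne : n ≠ 0 := by omega
      simp [hcn n hne, hne]
  have hu0 : u 0 ≠ 0 := by
    have := hu_nv 0 (by simp)
    have hs0 : ∑ i ∈ Finset.range (np + 1), u i * (0:ℂ) ^ i = u 0 := by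
      rw [Finset.sum_eq_single_of_mem 0 (Finset.mem_range.mpr (by omega))]
      · simp
      · intro i _ hi
        simp [zero_pow hi]
    rwa [hs0] at this
  have hv0 : v 0 = (u 0)⁻¹ := by
    have h1 : c 0 = ut 0 * v 0 := by
      rw [hcdef]
      simp [Finset.sum_range_one]
    have h2 : ut 0 = u 0 := by simp [hutdef]
    have h3 : u 0 * v 0 = 1 := by
      rw [← h2, ← h1, hc0]
    exact (inv_eq_of_mul_eq_one_right h3).symm
  exact ⟨v, hsv, hv0, fun n => by rw [← hcall n]⟩

lemma step_V (np : ℕ) (u : ℕ → ℂ)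
    (hu_nv : ∀ z : ℂ, ‖z‖ ≤ 1 → ∑ i ∈ Finset.range (np + 1), u i * z ^ i ≠ 0) :
    ∃ V : ℤ → ℂ, (Summable fun k => ‖V k‖) ∧ (∀ k : ℤ, k < 0 → V k = 0) ∧ V 0 = (u 0)⁻¹ ∧
      ∀ k : ℤ, (∑ i ∈ Finset.range (np + 1), u i * V (k - (i : ℤ))) = if k = 0 then 1 else 0 := by
  obtain ⟨v, hsv, hv0, hconv⟩ := step_inv np u hu_nv
  set V : ℤ → ℂ := fun k => if 0 ≤ k then v k.toNat else 0 with hVdef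
  have hVneg : ∀ k : ℤ, k < 0 → V k = 0 := by
    intro k hk
    simp [hVdef, not_le.mpr hk]
  have hVnat : ∀ n : ℕ, V (n : ℤ) = v n := by
    intro n
    simp [hVdef]
  refine ⟨V, ?_, hVneg, by simpa using hVnat 0 ▸ hv0, ?_⟩
  · apply Summable.of_nat_of_neg
    · simpa only [hVnat] using hsv
    · apply summable_of_ne_finset_zero (s := ({0} : Finset ℕ))
      intro n hn
      have hn0 : n ≠ 0 := by simpa using hn
      have : (-(n:ℤ)) < 0 := by omega
      rw [hVneg _ this, norm_zero]
  · intro k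
    by_cases hk : k < 0
    · rw [if_neg (by omega)]
      apply Finset.sum_eq_zero
      intro i _
      rw [hVneg (k - i) (by omega), mul_zero]
    · push_neg at hk
      obtain ⟨n, rfl⟩ : ∃ n : ℕ, k = (n : ℤ) := ⟨k.toNat, (Int.toNat_of_nonneg hk).symm⟩
      have key := hconv n
      have hA : ∑ i ∈ Finset.range (np + 1), u i * V ((n:ℤ) - i) =
          ∑ i ∈ Finset.range (max np n + 1),
            (if i ≤ np then u i else 0) * V ((n : ℤ) - i) := by
        rw [Finset.sum_congr rfl (fun i hi => ?_)]
        · exact Finset.sum_subset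
            (Finset.range_subset_range.mpr (Nat.succ_le_succ (le_max_left np n)))
            (fun i _ hi => by
              rw [Finset.mem_range] at hi
              rw [if_neg (by omega : ¬ i ≤ np), zero_mul])
        · rw [Finset.mem_range] at hi
          rw [if_pos (by omega : i ≤ np)]
      have hB : ∑ i ∈ Finset.range (n + 1), (if i ≤ np then u i else 0) * v (n - i) =
          ∑ i ∈ Finset.range (max np n + 1),
            (if i ≤ np then u i else 0) * V ((n : ℤ) - i) := by
        rw [Finset.sum_congr rfl (fun i hi => ?_)]
        · exact Finset.sum_subset
            (Finset.range_subset_range.mpr (Nat.succ_le_succ (le_max_right np n)))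
            (fun i _ hi => by
              rw [Finset.mem_range] at hi
              rw [hVneg ((n:ℤ) - i) (by omega), mul_zero])
        · rw [Finset.mem_range] at hi
          have hin : i ≤ n := by omega
          have hcast : ((n:ℤ) - i) = ((n - i : ℕ) : ℤ) := by
            push_cast [Nat.cast_sub hin]
            ring
          rw [hcast, hVnat]
      rw [hA, ← hB, key]
      simp [Int.natCast_eq_zero]


/-- Let `a(z) = ∑_{j=-n₋}^{n₊} a_j z^j` admit a Wiener–Hopf
factorization `a(z) = u(z) l(1/z)` with `u, l` polynomials nonvanishing on the closed unit
disk, and let `h` be the absolutely summable Laurent coefficient sequence of `a(z)⁻¹`,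
i.e. the Wiener-class sequence with `a * h = δ₀` (convolution). Then, for every `i ≥ 1`,
`∑_{j=0}^{n₋} h_{j+1-i} l_j` equals `u₀⁻¹` if `i = 1` and `0` if `i ≥ 2`: multiplying the
semi-infinite Toeplitz matrix `(h_{j-i})` by the coefficient vector of `l` yields `u₀⁻¹`
times the first unit vector, so a finite Toeplitz section of `a⁻¹` recovers the
Wiener–Hopf factor `l` up to a normalization constant. -/
theorem toeplitz_of_inverse_symbol_recovers_factor
    (nm np : ℕ) (a : ℤ → ℂ)
    (hsupp : ∀ k : ℤ, (k < -(nm : ℤ) ∨ (np : ℤ) < k) → a k = 0)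
    (u l : ℕ → ℂ)
    (hu_supp : ∀ i : ℕ, np < i → u i = 0) (hl_supp : ∀ i : ℕ, nm < i → l i = 0)
    (hu_nv : ∀ z : ℂ, ‖z‖ ≤ 1 → ∑ i ∈ Finset.range (np + 1), u i * z ^ i ≠ 0)
    (hl_nv : ∀ z : ℂ, ‖z‖ ≤ 1 → ∑ i ∈ Finset.range (nm + 1), l i * z ^ i ≠ 0)
    (hfact : ∀ k : ℤ, a k =
      ∑ i ∈ Finset.range (np + 1), ∑ j ∈ Finset.range (nm + 1),
        if (i : ℤ) - (j : ℤ) = k then u i * l j else 0)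
    (h : ℤ → ℂ) (hh_sum : Summable fun k : ℤ => ‖h k‖)
    (hh : ∀ k : ℤ, (∑' m : ℤ, a m * h (k - m)) = if k = 0 then 1 else 0) :
    ∀ i : ℕ, 1 ≤ i →
      (∑ j ∈ Finset.range (nm + 1), h ((j : ℤ) + 1 - (i : ℤ)) * l j) =
        if i = 1 then (u 0)⁻¹ else 0 := by
  obtain ⟨V, hVs, hVneg, hV0, hVconv⟩ := step_V np u hu_nv
  set w : ℤ → ℂ := fun s => ∑ j ∈ Finset.range (nm + 1), h (s + j) * l j with hwdef
  -- convolution identity for w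
  have hconv : ∀ k : ℤ,
      (∑ i ∈ Finset.range (np + 1), u i * w (k - (i : ℤ))) = if k = 0 then 1 else 0 := by
    intro k
    rw [← hh k]
    have h1 : ∀ m : ℤ, a m * h (k - m) =
        ∑ p ∈ Finset.range (np + 1) ×ˢ Finset.range (nm + 1),
          (if m = (p.1 : ℤ) - (p.2 : ℤ) then u p.1 * l p.2 * h (k - p.1 + p.2) else 0) := by
      intro m
      rw [hfact m, Finset.sum_mul, Finset.sum_product]
      apply Finset.sum_congr rfl
      intro i _
      rw [Finset.sum_mul]
      apply Finset.sum_congr rfl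
      intro j _
      by_cases hm : m = (i : ℤ) - (j : ℤ)
      · rw [if_pos hm.symm, if_pos hm]
        have harg : k - m = k - i + j := by rw [hm]; ring
        rw [harg]
      · rw [if_neg (fun hc => hm hc.symm), if_neg hm, zero_mul]
    have hmain : (∑' m : ℤ, a m * h (k - m)) =
        ∑ i ∈ Finset.range (np + 1), u i * w (k - (i : ℤ)) := by
      rw [tsum_congr h1, Summable.tsum_finsetSum (fun p _ => summable_of_ne_finset_zero
        (s := ({(p.1 : ℤ) - (p.2 : ℤ)} : Finset ℤ))
        (fun m hm => if_neg (by simpa using hm)))]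
      have h2 : ∀ p ∈ Finset.range (np + 1) ×ˢ Finset.range (nm + 1),
          (∑' m : ℤ, if m = (p.1 : ℤ) - (p.2 : ℤ) then u p.1 * l p.2 * h (k - p.1 + p.2) else 0)
            = u p.1 * l p.2 * h (k - p.1 + p.2) := fun p _ => tsum_ite_eq _ _
      rw [Finset.sum_congr rfl h2, Finset.sum_product]
      apply Finset.sum_congr rfl
      intro i _
      rw [hwdef]
      simp only
      rw [Finset.mul_sum]
      apply Finset.sum_congr rfl
      intro j _
      have harg : k - (i : ℤ) + (j : ℤ) = k - i + j := rfl
      ring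
    rw [hmain]
  -- boundedness of w
  have hT : ∀ s : ℤ, ‖h s‖ ≤ ∑' k, ‖h k‖ :=
    fun s => Summable.le_tsum hh_sum s (fun _ _ => norm_nonneg _)
  set C : ℝ := ∑ j ∈ Finset.range (nm + 1), (∑' k, ‖h k‖) * ‖l j‖ with hC
  have hwb : ∀ s : ℤ, ‖w s‖ ≤ C := by
    intro s
    refine (norm_sum_le _ _).trans ?_
    apply Finset.sum_le_sum
    intro j _
    rw [norm_mul]
    exact mul_le_mul_of_nonneg_right (hT _) (norm_nonneg _)
  -- summability helper
  have hsummG : ∀ (b : ℂ) (t : ℤ), Summable fun s : ℤ => V s * b * w (t - s) := by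
    intro b t
    apply Summable.of_norm
    apply Summable.of_nonneg_of_le (fun s => norm_nonneg _) _ (hVs.mul_right (‖b‖ * C))
    intro s
    rw [norm_mul, norm_mul, mul_assoc]
    apply mul_le_mul_of_nonneg_left _ (norm_nonneg (V s))
    exact mul_le_mul_of_nonneg_left (hwb _) (norm_nonneg b)
  -- main identity : w = V
  have hwV : ∀ m : ℤ, w m = V m := by
    intro m
    have hsummA : ∀ i : ℕ, Summable fun s : ℤ => V s * u i * w (m - s - (i:ℤ)) := by
      intro i
      apply Summable.congr (hsummG (u i) (m - i))
      intro s
      rw [sub_right_comm]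
    have hE2 : ∑' s : ℤ, V s * (∑ i ∈ Finset.range (np + 1), u i * w (m - s - (i : ℤ))) = V m := by
      have hfun : (fun s : ℤ => V s * (∑ i ∈ Finset.range (np + 1), u i * w (m - s - (i : ℤ)))) =
          fun s => if s = m then V m else 0 := by
        funext s
        rw [hconv (m - s)]
        by_cases hs : s = m
        · subst hs
          rw [if_pos (by ring), if_pos rfl, mul_one]
        · rw [if_neg (by omega : ¬ (m - s = 0)), if_neg hs, mul_zero]
      rw [hfun, tsum_ite_eq]
    have hE3 : ∑' s : ℤ, V s * (∑ i ∈ Finset.range (np + 1), u i * w (m - s - (i : ℤ))) =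
        ∑ i ∈ Finset.range (np + 1), ∑' s : ℤ, V s * u i * w (m - s - (i : ℤ)) := by
      rw [tsum_congr (fun s => ?_), Summable.tsum_finsetSum (fun i _ => hsummA i)]
      rw [Finset.mul_sum]
      apply Finset.sum_congr rfl
      intro i _
      ring
    have hE4 : ∀ i : ℕ, (∑' s : ℤ, V s * u i * w (m - s - (i : ℤ))) =
        ∑' t : ℤ, V (t - i) * u i * w (m - t) := by
      intro i
      refine (tsum_congr fun s => ?_).trans
        ((Equiv.addRight (i : ℤ)).tsum_eq fun t => V (t - i) * u i * w (m - t))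
      simp only [Equiv.coe_addRight, add_sub_cancel_right]
      rw [sub_add_eq_sub_sub]
    have hE5 : ∑ i ∈ Finset.range (np + 1), (∑' t : ℤ, V (t - i) * u i * w (m - t)) =
        ∑' t : ℤ, ∑ i ∈ Finset.range (np + 1), V (t - i) * u i * w (m - t) := by
      refine (Summable.tsum_finsetSum fun i _ => ?_).symm
      have hs2 : Summable fun s : ℤ =>
          (fun t : ℤ => V (t - i) * u i * w (m - t)) ((Equiv.addRight (i : ℤ)) s) := by
        apply Summable.congr (hsummA i)
        intro s
        simp only [Equiv.coe_addRight, add_sub_cancel_right]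
        rw [sub_add_eq_sub_sub]
      exact ((Equiv.addRight (i : ℤ)).summable_iff).mp hs2
    have hE6 : ∑' t : ℤ, (∑ i ∈ Finset.range (np + 1), V (t - i) * u i * w (m - t)) = w m := by
      have hfun : (fun t : ℤ => ∑ i ∈ Finset.range (np + 1), V (t - (i:ℤ)) * u i * w (m - t)) =
          fun t => if t = 0 then w m else 0 := by
        funext t
        have hin : ∑ i ∈ Finset.range (np + 1), V (t - (i:ℤ)) * u i * w (m - t) =
            (∑ i ∈ Finset.range (np + 1), u i * V (t - (i:ℤ))) * w (m - t) := by
          rw [Finset.sum_mul]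
          exact Finset.sum_congr rfl fun i _ => by ring
        rw [hin, hVconv t]
        by_cases ht : t = 0
        · subst ht
          rw [if_pos rfl, if_pos rfl, one_mul, sub_zero]
        · rw [if_neg ht, if_neg ht, zero_mul]
      rw [hfun, tsum_ite_eq]
    calc w m = ∑' t : ℤ, ∑ i ∈ Finset.range (np + 1), V (t - i) * u i * w (m - t) := hE6.symm
      _ = ∑ i ∈ Finset.range (np + 1), ∑' t : ℤ, V (t - i) * u i * w (m - t) := hE5.symm
      _ = ∑ i ∈ Finset.range (np + 1), ∑' s : ℤ, V s * u i * w (m - s - (i : ℤ)) :=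
          (Finset.sum_congr rfl fun i _ => (hE4 i).symm)
      _ = ∑' s : ℤ, V s * (∑ i ∈ Finset.range (np + 1), u i * w (m - s - (i : ℤ))) := hE3.symm
      _ = V m := hE2
  -- conclusion
  intro i hi
  have htarget : (∑ j ∈ Finset.range (nm + 1), h ((j : ℤ) + 1 - (i : ℤ)) * l j) = w (1 - i) := by
    rw [hwdef]
    simp only
    apply Finset.sum_congr rfl
    intro j _
    have harg : (j : ℤ) + 1 - (i : ℤ) = 1 - i + j := by ring
    rw [harg]
  rw [htarget, hwV]
  by_cases h1 : i = 1
  · subst h1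
    rw [if_pos rfl]
    simpa using hV0
  · rw [if_neg h1]
    exact hVneg _ (by omega)
end

section
/- Let p(z) = ∑_{i=0}^{d} p_i z^i be a complex polynomial with p(z) ≠ 0 for all z in the closed unit disk {z ∈ ℂ : |z| ≤ 1}. Then the formal power series inverse v = ∑_{k≥0} v_k z^k of p (the unique power series with p·v = 1) has absolutely summable coefficients: ∑_{k≥0} |v_k| < ∞. (Hence the reciprocal of a Wiener–Hopf factor nonvanishing on the closed unit disk again belongs to the Wiener class.) -/
open Complex Metric Finset
open scoped Real

/-- Pushing a finite sum through a circle integral. -/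
lemma circleIntegral_finset_sum' {ι : Type*} (s : Finset ι) (c : ℂ) (R : ℝ)
    (F : ι → ℂ → ℂ) (h : ∀ i ∈ s, CircleIntegrable (F i) c R) :
    (∮ z in C(c, R), ∑ i ∈ s, F i z) = ∑ i ∈ s, ∮ z in C(c, R), F i z := by
  simp only [circleIntegral, Finset.smul_sum]
  exact intervalIntegral.integral_finset_sum fun i hi => (h i hi).out

set_option maxHeartbeats 1000000 in
/-- Let `p(z) = ∑_{i=0}^d p_i z^i` be a complex polynomial nonvanishing
on the closed unit disk. Then the formal power series inverse `v` of `p` (the unique power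
series with `p·v = 1`, determined by `p₀ v₀ = 1` and `∑_i p_i v_{n-i} = 0` for `n ≥ 1`)
has absolutely summable coefficients: `∑_{k≥0} |v_k| < ∞`. Hence the reciprocal of a
Wiener–Hopf factor nonvanishing on the closed unit disk belongs to the Wiener class. -/
theorem inverse_of_nonvanishing_polynomial_is_wiener
    (d : ℕ) (p : ℕ → ℂ) (hp_supp : ∀ i : ℕ, d < i → p i = 0)
    (hp : ∀ z : ℂ, ‖z‖ ≤ 1 → ∑ i ∈ Finset.range (d + 1), p i * z ^ i ≠ 0)
    (v : ℕ → ℂ)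
    (hv : ∀ n : ℕ, ∑ i ∈ Finset.range (n + 1), p i * v (n - i) =
      if n = 0 then 1 else 0) :
    Summable fun k : ℕ => ‖v k‖ := by
  classical
  set P : ℂ → ℂ := fun z => ∑ i ∈ Finset.range (d + 1), p i * z ^ i with hPdef
  have hPdiff : Differentiable ℂ P := by
    apply Differentiable.fun_sum
    intro i _
    exact (differentiable_pow i).const_mul (p i)
  -- extend nonvanishing to a slightly larger closed ball
  have hopen : IsOpen {z : ℂ | P z ≠ 0} := isOpen_ne.preimage hPdiff.continuous
  have hsub : closedBall (0 : ℂ) 1 ⊆ {z : ℂ | P z ≠ 0} := fun z hz =>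
    hp z (mem_closedBall_zero_iff.mp hz)
  obtain ⟨δ, hδ, hth⟩ :=
    (isCompact_closedBall (0 : ℂ) 1).exists_thickening_subset_open hopen hsub
  set R : ℝ := 1 + δ / 2 with hRdef
  have hR1 : (1 : ℝ) < R := by rw [hRdef]; linarith
  have hR0 : (0 : ℝ) < R := by linarith
  have hPne : ∀ z ∈ closedBall (0 : ℂ) R, P z ≠ 0 := by
    intro z hz
    rw [mem_closedBall_zero_iff] at hz
    by_cases h1 : ‖z‖ ≤ 1
    · exact hp z h1
    · push_neg at h1
      apply hth
      rw [mem_thickening_iff]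
      refine ⟨(‖z‖)⁻¹ • z, ?_, ?_⟩
      · rw [mem_closedBall_zero_iff, norm_smul, norm_inv, Real.norm_eq_abs,
          _root_.abs_of_nonneg (norm_nonneg z)]
        rw [inv_mul_cancel₀ (by positivity)]
      · have hz0 : z ≠ 0 := by intro h; simp [h] at h1; linarith
        rw [dist_eq_norm]
        have : z - (‖z‖)⁻¹ • z = (1 - (‖z‖)⁻¹) • z := by
          rw [sub_smul, one_smul]
        rw [this, norm_smul, Real.norm_eq_abs]
        have h1' : (‖z‖)⁻¹ < 1 := by
          rw [inv_lt_one_iff₀]; right; exact h1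
        rw [_root_.abs_of_nonneg (by linarith)]
        have he : (1 - (‖z‖)⁻¹) * ‖z‖ = ‖z‖ - 1 := by
          rw [sub_mul, one_mul, inv_mul_cancel₀ (by positivity)]
        rw [he]
        have : ‖z‖ ≤ 1 + δ / 2 := hRdef ▸ hz
        linarith
  set f : ℂ → ℂ := fun z => (P z)⁻¹ with hfdef
  have hfdiff : DifferentiableOn ℂ f (closedBall (0 : ℂ) R) :=
    (hPdiff.differentiableOn).inv hPne
  set R' : NNReal := ⟨R, hR0.le⟩ with hR'def
  have hR'coe : (R' : ℝ) = R := rfl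
  have hfps : HasFPowerSeriesOnBall f (cauchyPowerSeries f 0 R') 0 R' :=
    DifferentiableOn.hasFPowerSeriesOnBall (by rw [hR'coe]; exact hfdiff)
      (NNReal.coe_pos.mp hR0)
  set q := cauchyPowerSeries f 0 R' with hqdef
  set c : ℕ → ℂ := fun n =>
    (2 * ↑π * I)⁻¹ • ∮ z in C(0, (R' : ℝ)), (z - 0)⁻¹ ^ n • (z - 0)⁻¹ • f z with hcdef
  have hqc : ∀ n, ‖q n‖ = ‖c n‖ := fun n =>
    ContinuousMultilinearMap.norm_mkPiRing (c n)
  -- summability of c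
  have hR'1 : (1 : NNReal) < R' := by
    rw [← NNReal.coe_lt_coe, NNReal.coe_one, hR'coe]
    exact hR1
  have hrad : ((1 : NNReal) : ENNReal) < q.radius :=
    lt_of_lt_of_le (ENNReal.coe_lt_coe.mpr hR'1) hfps.r_le
  have hsum : Summable fun n => ‖q n‖ * ((1 : NNReal) : ℝ) ^ n :=
    q.summable_norm_mul_pow hrad
  -- the circle integrals
  set g : ℤ → ℂ := fun m => ∮ z in C(0, R), z ^ m * f z with hgdef
  have hcg : ∀ k : ℕ, c k = (2 * ↑π * I)⁻¹ * g (-(k + 1)) := by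
    intro k
    have hfun : (fun z : ℂ => (z - 0)⁻¹ ^ k • (z - 0)⁻¹ • f z) =
        fun z : ℂ => z ^ (-(k + 1) : ℤ) * f z := by
      funext z
      have h1 : z ^ (-(k + 1 : ℕ) : ℤ) = z⁻¹ ^ k * z⁻¹ := by
        rw [zpow_neg, zpow_natCast, pow_succ, mul_inv, inv_pow]
      simp only [sub_zero, smul_eq_mul]
      push_cast at h1 ⊢
      rw [h1]; ring
    show (2 * ↑π * I)⁻¹ • (∮ z in C(0, (R' : ℝ)), (z - 0)⁻¹ ^ k • (z - 0)⁻¹ • f z) =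
        (2 * ↑π * I)⁻¹ * g (-(k + 1))
    rw [hfun, smul_eq_mul]
    simp only [hgdef, hR'coe]
  have hg0 : ∀ m : ℕ, g (m : ℤ) = 0 := by
    intro m
    have hfun : (fun z : ℂ => z ^ (m : ℤ) * f z) = fun z : ℂ => z ^ m * f z := by
      funext z; rw [zpow_natCast]
    have hdiff : DifferentiableOn ℂ (fun z : ℂ => z ^ m * f z) (closedBall (0 : ℂ) R) :=
      (differentiable_pow m).differentiableOn.mul hfdiff
    rw [hgdef]
    simp only [hfun]
    refine Complex.circleIntegral_eq_zero_of_differentiable_on_off_countable hR0.le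
      Set.countable_empty hdiff.continuousOn ?_
    intro z hz
    exact hdiff.differentiableAt (closedBall_mem_nhds_of_mem hz.1)
  -- integrability helper
  have hfcont : ContinuousOn f (sphere (0 : ℂ) R) :=
    ((hPdiff.continuous.continuousOn).inv₀ fun z hz =>
      hPne z (sphere_subset_closedBall hz))
  have hzne : ∀ z ∈ sphere (0 : ℂ) R, z ≠ 0 := by
    intro z hz h0
    rw [mem_sphere_zero_iff_norm] at hz
    rw [h0] at hz; simp at hz; linarith
  have hint : ∀ (m : ℤ) (a : ℂ), CircleIntegrable (fun z => a * (z ^ m * f z)) 0 R := by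
    intro m a
    refine ContinuousOn.circleIntegrable hR0.le ?_
    refine continuousOn_const.mul (ContinuousOn.mul ?_ hfcont)
    intro z hz
    exact (continuousAt_zpow₀ z m (Or.inl (hzne z hz))).continuousWithinAt
  -- the key recurrence for c
  have hc : ∀ n : ℕ, ∑ i ∈ Finset.range (n + 1), p i * c (n - i) =
      if n = 0 then 1 else 0 := by
    intro n
    have step1 : ∑ i ∈ Finset.range (n + 1), p i * c (n - i) =
        (2 * ↑π * I)⁻¹ * ∑ i ∈ Finset.range (n + 1), p i * g ((i : ℤ) - (n + 1)) := by
      rw [Finset.mul_sum]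
      refine Finset.sum_congr rfl fun i hi => ?_
      rw [Finset.mem_range] at hi
      have hi' : i ≤ n := Nat.lt_succ_iff.mp hi
      have : (-(((n - i : ℕ) : ℤ) + 1)) = (i : ℤ) - (n + 1) := by
        push_cast [Nat.cast_sub hi']; ring
      rw [hcg (n - i), this]; ring
    have step2 : ∑ i ∈ Finset.range (n + 1), p i * g ((i : ℤ) - (n + 1)) =
        ∑ i ∈ Finset.range (d + 1), p i * g ((i : ℤ) - (n + 1)) := by
      set N := max n d with hN
      have e1 : ∑ i ∈ Finset.range (n + 1), p i * g ((i : ℤ) - (n + 1)) =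
          ∑ i ∈ Finset.range (N + 1), p i * g ((i : ℤ) - (n + 1)) := by
        refine Finset.sum_subset (Finset.range_subset_range.mpr (by omega)) ?_
        intro i hi hni
        rw [Finset.mem_range] at hi
        rw [Finset.mem_range, not_lt] at hni
        by_cases hd : d < i
        · rw [hp_supp i hd]; ring
        · have hin : n + 1 ≤ i := hni
          have he : ((i : ℤ) - (n + 1)) = ((i - (n + 1) : ℕ) : ℤ) := by
            push_cast [Nat.cast_sub hin]; ring
          rw [he, hg0]; ring
      have e2 : ∑ i ∈ Finset.range (d + 1), p i * g ((i : ℤ) - (n + 1)) =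
          ∑ i ∈ Finset.range (N + 1), p i * g ((i : ℤ) - (n + 1)) := by
        refine Finset.sum_subset (Finset.range_subset_range.mpr (by omega)) ?_
        intro i hi hni
        rw [Finset.mem_range] at hi
        rw [Finset.mem_range, not_lt] at hni
        rw [hp_supp i (by omega)]; ring
      rw [e1, e2]
    have step3 : ∑ i ∈ Finset.range (d + 1), p i * g ((i : ℤ) - (n + 1)) =
        ∮ z in C(0, R), ∑ i ∈ Finset.range (d + 1),
          p i * (z ^ ((i : ℤ) - (n + 1)) * f z) := by
      rw [circleIntegral_finset_sum' _ _ _ _ (fun i _ => hint _ (p i))]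
      refine Finset.sum_congr rfl fun i _ => ?_
      calc p i * g ((i : ℤ) - (n + 1))
          = p i • ∮ z in C(0, R), z ^ ((i : ℤ) - (n + 1)) * f z := by
            rw [smul_eq_mul, hgdef]
        _ = ∮ z in C(0, R), p i • (z ^ ((i : ℤ) - (n + 1)) * f z) :=
            (circleIntegral.integral_smul _ _ _ _).symm
        _ = ∮ z in C(0, R), p i * (z ^ ((i : ℤ) - (n + 1)) * f z) := by
            simp only [smul_eq_mul]
    have step4 : (∮ z in C(0, R), ∑ i ∈ Finset.range (d + 1),
          p i * (z ^ ((i : ℤ) - (n + 1)) * f z)) =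
        ∮ z in C(0, R), (z - 0) ^ (-(n + 1) : ℤ) := by
      refine circleIntegral.integral_congr hR0.le fun z hz => ?_
      have hz0 := hzne z hz
      have hPz : P z ≠ 0 := hPne z (sphere_subset_closedBall hz)
      have hcalc : ∑ i ∈ Finset.range (d + 1), p i * (z ^ ((i : ℤ) - (n + 1)) * f z) =
          (∑ i ∈ Finset.range (d + 1), p i * z ^ i) * (z ^ (-(n + 1) : ℤ) * f z) := by
        rw [Finset.sum_mul]
        refine Finset.sum_congr rfl fun i _ => ?_
        rw [sub_eq_add_neg, zpow_add₀ hz0, zpow_natCast]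
        ring
      show ∑ i ∈ Finset.range (d + 1), p i * (z ^ ((i : ℤ) - (n + 1)) * f z) =
          (z - 0) ^ (-(n + 1) : ℤ)
      rw [hcalc, sub_zero]
      have hPzeq : (∑ i ∈ Finset.range (d + 1), p i * z ^ i) = P z := rfl
      have hfz : f z = (P z)⁻¹ := rfl
      rw [hPzeq, hfz, mul_comm (z ^ (-(n + 1) : ℤ)) _, ← mul_assoc,
        mul_inv_cancel₀ hPz, one_mul]
    have step5 : (∮ z in C(0, R), (z - 0) ^ (-(n + 1) : ℤ)) =
        if n = 0 then (2 * ↑π * I) else 0 := by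
      rcases Nat.eq_zero_or_pos n with h | h
      · subst h
        rw [if_pos rfl]
        have h2 : (∮ z in C(0, R), (z - 0) ^ (-(((0 : ℕ) : ℤ) + 1))) =
            ∮ z in C(0, R), (z - 0)⁻¹ := by
          apply circleIntegral.integral_congr hR0.le
          intro z _
          norm_num
        rw [h2]
        exact circleIntegral.integral_sub_inv_of_mem_ball (mem_ball_self hR0)
      · rw [if_neg (by omega)]
        exact circleIntegral.integral_sub_zpow_of_ne
          (by omega : (-((n : ℤ) + 1)) ≠ -1) 0 0 R
    rw [step1, step2, step3, step4, step5]
    by_cases h : n = 0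
    · rw [if_pos h, if_pos h]
      exact inv_mul_cancel₀ Complex.two_pi_I_ne_zero
    · rw [if_neg h, if_neg h, mul_zero]
  -- identify v with c by strong induction
  have hp0 : p 0 ≠ 0 := by
    intro h
    have h0 := hv 0
    simp [h] at h0
  have hvc : ∀ n, v n = c n := by
    intro n
    induction n using Nat.strong_induction_on with
    | _ n ih =>
      have h1 := hv n
      have h2 := hc n
      rw [Finset.sum_range_succ'] at h1 h2
      have hsum' : ∑ i ∈ Finset.range n, p (i + 1) * v (n - (i + 1)) =
          ∑ i ∈ Finset.range n, p (i + 1) * c (n - (i + 1)) := by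
        refine Finset.sum_congr rfl fun i hi => ?_
        rw [Finset.mem_range] at hi
        rw [ih (n - (i + 1)) (by omega)]
      rw [hsum'] at h1
      have := h1.trans h2.symm
      have hcancel := add_left_cancel this
      simpa using mul_left_cancel₀ hp0 hcancel
  have he : (fun k : ℕ => ‖v k‖) = fun n => ‖q n‖ * ((1 : NNReal) : ℝ) ^ n := by
    funext n; rw [hvc, hqc]; simp
  rw [he]
  exact hsum
end
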